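/- Two triangles are congruent if they have an equal side, an equal angle opposite to that side, and an equal internal bisector of that angle. Precisely: if triangles ABC and ABC' satisfy ∠ACB = ∠AC'B, with C and C' on the same side of line AB and on the same side of the perpendicular bisector of AB, and the internal angle bisectors from C and C' (to side AB) have equal lengths, then the triangles are congruent (C = C'). -/

import Mathlib

open EuclideanGeometry Real

noncomputable section

/-! ### Auxiliary real-analysis lemmas -/

private lemma step_real {γ x cd ab : ℝ} (hγ0 : 0 < γ) (hγπ : γ < π) (hx0 : 0 < x)
    (hxγ : x + γ < π) (hcd : 0 ≤ cd) (hab : 0 < ab)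
    (h1 : cd^2 * Real.sin γ^2 * (Real.sin x + Real.sin (π-γ-x))^2
      = ab^2 * Real.sin (π-γ-x)^2 * ((Real.sin x + Real.sin (π-γ-x))^2 + Real.sin γ^2
          - 2*Real.cos x*Real.sin γ*(Real.sin x + Real.sin (π-γ-x)))) :
    2*Real.cos (γ/2)*Real.sin (γ/2)*Real.sin (x+γ/2)*cd
      = ab*(Real.sin (x+γ/2)^2 - Real.sin (γ/2)^2) := by
  have hsh : 0 < Real.sin (γ/2) := Real.sin_pos_of_pos_of_lt_pi (by linarith) (by linarith)
  have hch : 0 < Real.cos (γ/2) := Real.cos_pos_of_mem_Ioo ⟨by linarith, by linarith⟩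
  have hst : 0 < Real.sin (x+γ/2) := Real.sin_pos_of_pos_of_lt_pi (by linarith) (by linarith)
  set sh := Real.sin (γ/2) with hshdef
  set ch := Real.cos (γ/2) with hchdef
  set st := Real.sin (x+γ/2) with hstdef
  set ct := Real.cos (x+γ/2) with hctdef
  have p1 : st^2 + ct^2 = 1 := Real.sin_sq_add_cos_sq _
  have p2 : sh^2 + ch^2 = 1 := Real.sin_sq_add_cos_sq _
  have hshst : sh < st := by
    rcases le_or_gt (x + γ/2) (π/2) with hle | hgt
    · exact Real.strictMonoOn_sin ⟨by linarith, by linarith⟩ ⟨by linarith, by linarith⟩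
        (by linarith)
    · have h2 : st = Real.sin (π - (x+γ/2)) := by rw [Real.sin_pi_sub]
      rw [h2]
      exact Real.strictMonoOn_sin ⟨by linarith, by linarith⟩ ⟨by linarith, by linarith⟩
        (by linarith)
  have hsg : Real.sin γ = 2*sh*ch := by
    have := Real.sin_two_mul (γ/2); rw [show 2*(γ/2) = γ by ring] at this
    rw [this]
  have hsx : Real.sin x = st*ch - ct*sh := by
    have := Real.sin_sub (x+γ/2) (γ/2); rw [show x+γ/2-γ/2 = x by ring] at this
    rw [this]
  have hcx : Real.cos x = ct*ch + st*sh := by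
    have := Real.cos_sub (x+γ/2) (γ/2); rw [show x+γ/2-γ/2 = x by ring] at this
    rw [this]
  have hsb : Real.sin (π-γ-x) = st*ch + ct*sh := by
    rw [show π-γ-x = π-(x+γ/2+γ/2) by ring, Real.sin_pi_sub, Real.sin_add]
  rw [hsg, hsx, hcx, hsb] at h1
  have hK2 : (2*ch)^2*((2*ch*sh*st*cd)^2) = (2*ch)^2*((ab*(st^2-sh^2))^2) := by
    linear_combination h1 + (ab^2*4*ch^2) *
      ( ((st*ch+ct*sh)^2) * ((-(sh^2))*p1 + (-(st^2))*p2)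
        + ((st*ch+ct*sh)*(st*ch-ct*sh) + st^2 - sh^2) * ((-(sh^2))*p1 + (st^2)*p2) )
  have hX : (2*ch*sh*st*cd)^2 = (ab*(st^2-sh^2))^2 :=
    mul_left_cancel₀ (by positivity) hK2
  have hfac : ((2*ch*sh*st*cd) - ab*(st^2-sh^2)) * ((2*ch*sh*st*cd) + ab*(st^2-sh^2)) = 0 := by
    linear_combination hX
  have hXpos : 0 ≤ 2*ch*sh*st*cd := by positivity
  have hYpos : 0 ≤ ab*(st^2-sh^2) := by
    have : 0 ≤ st^2 - sh^2 := by nlinarith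
    positivity
  rcases mul_eq_zero.mp hfac with h | h
  · linarith
  · linarith

private lemma key_real {γ α α' cd ab : ℝ} (hγ0 : 0 < γ) (hγπ : γ < π)
    (hα0 : 0 < α) (hαγ : α + γ < π) (hα'0 : 0 < α') (hα'γ : α' + γ < π)
    (hcd : 0 ≤ cd) (hab : 0 < ab)
    (hside : (α < π - γ - α) ↔ (α' < π - γ - α'))
    (h1 : cd^2 * Real.sin γ^2 * (Real.sin α + Real.sin (π-γ-α))^2
      = ab^2 * Real.sin (π-γ-α)^2 * ((Real.sin α + Real.sin (π-γ-α))^2 + Real.sin γ^2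
          - 2*Real.cos α*Real.sin γ*(Real.sin α + Real.sin (π-γ-α))))
    (h1' : cd^2 * Real.sin γ^2 * (Real.sin α' + Real.sin (π-γ-α'))^2
      = ab^2 * Real.sin (π-γ-α')^2 * ((Real.sin α' + Real.sin (π-γ-α'))^2 + Real.sin γ^2
          - 2*Real.cos α'*Real.sin γ*(Real.sin α' + Real.sin (π-γ-α')))) :
    α = α' := by
  have e := step_real hγ0 hγπ hα0 hαγ hcd hab h1
  have e' := step_real hγ0 hγπ hα'0 hα'γ hcd hab h1'
  have hsh : 0 < Real.sin (γ/2) := Real.sin_pos_of_pos_of_lt_pi (by linarith) (by linarith)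
  have hst : 0 < Real.sin (α+γ/2) := Real.sin_pos_of_pos_of_lt_pi (by linarith) (by linarith)
  have hst' : 0 < Real.sin (α'+γ/2) := Real.sin_pos_of_pos_of_lt_pi (by linarith) (by linarith)
  set sh := Real.sin (γ/2)
  set st := Real.sin (α+γ/2)
  set st' := Real.sin (α'+γ/2)
  have h0 : ab*((st'-st)*(st*st'+sh^2)) = 0 := by linear_combination st'*e - st*e'
  have hfac : st' - st = 0 := by
    have h2 : 0 < st*st'+sh^2 := by positivity
    rcases mul_eq_zero.mp h0 with h | h
    · exact absurd h (ne_of_gt hab)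
    · rcases mul_eq_zero.mp h with h | h
      · exact h
      · exact absurd h (ne_of_gt h2)
  have hss : st = st' := by linarith
  have hiff : (α + γ/2 < π/2) ↔ (α' + γ/2 < π/2) := by
    constructor
    · intro hh; have := hside.mp (by linarith); linarith
    · intro hh; have := hside.mpr (by linarith); linarith
  rcases lt_or_ge (α+γ/2) (π/2) with hlt | hge
  · have hlt' : α'+γ/2 < π/2 := hiff.mp hlt
    have heq : α + γ/2 = α' + γ/2 :=
      Real.injOn_sin ⟨by linarith, by linarith⟩ ⟨by linarith, by linarith⟩ hss
    linarith
  · have hge' : π/2 ≤ α'+γ/2 := le_of_not_gt (fun hc => absurd (hiff.mpr hc) (not_lt.mpr hge))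
    have h2 : Real.sin (π-(α+γ/2)) = Real.sin (π-(α'+γ/2)) := by
      rw [Real.sin_pi_sub, Real.sin_pi_sub]; exact hss
    have heq : π-(α+γ/2) = π-(α'+γ/2) :=
      Real.injOn_sin ⟨by linarith, by linarith⟩ ⟨by linarith, by linarith⟩ h2
    linarith

private lemma sin_lt_sin_of_lt {x y : ℝ} (hx : 0 < x) (hxy : x < y) (hs : x + y < π) :
    Real.sin x < Real.sin y := by
  rcases le_or_gt y (π/2) with hle | hgt
  · exact Real.strictMonoOn_sin ⟨by linarith, by linarith⟩ ⟨by linarith, by linarith⟩ hxy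
  · rw [← Real.sin_pi_sub y]
    exact Real.strictMonoOn_sin ⟨by linarith, by linarith⟩ ⟨by linarith, by linarith⟩
      (by linarith)

private lemma lt_iff_sin_lt_sin {x y : ℝ} (hx : 0 < x) (hy : 0 < y) (hs : x + y < π) :
    x < y ↔ Real.sin x < Real.sin y := by
  constructor
  · intro h; exact sin_lt_sin_of_lt hx h hs
  · intro h
    rcases lt_trichotomy x y with h1 | h1 | h1
    · exact h1
    · subst h1; exact absurd h (lt_irrefl _)
    · exact absurd (sin_lt_sin_of_lt hy h1 (by linarith)) (not_lt.mpr (le_of_lt h))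

/-! ### Auxiliary geometric lemmas -/

section Torsor

open scoped RealInnerProductSpace

variable {V : Type*} {P : Type*} [NormedAddCommGroup V] [InnerProductSpace ℝ V] [MetricSpace P]
  [NormedAddTorsor V P]

private lemma sin_angle_mul_eq (p q r : P) :
    Real.sin (∠ q p r) * (dist p q * dist p r) = Real.sin (∠ p q r) * (dist q p * dist q r) := by
  rw [EuclideanGeometry.angle, EuclideanGeometry.angle, dist_comm p r, dist_comm q r,
    dist_eq_norm_vsub V p q, dist_eq_norm_vsub V r p, dist_eq_norm_vsub V q p,
    dist_eq_norm_vsub V r q]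
  have h1 : p -ᵥ q = -(q -ᵥ p) := (neg_vsub_eq_vsub_rev q p).symm
  have h2 : r -ᵥ q = (r -ᵥ p) - (q -ᵥ p) := (vsub_sub_vsub_cancel_right r q p).symm
  rw [h1, h2, norm_neg]
  set x := q -ᵥ p
  set y := r -ᵥ p
  rw [InnerProductGeometry.sin_angle_mul_norm_mul_norm,
    show ‖x‖ * ‖y - x‖ = ‖-x‖ * ‖y - x‖ by rw [norm_neg],
    InnerProductGeometry.sin_angle_mul_norm_mul_norm]
  congr 1
  simp only [inner_sub_left, inner_sub_right, inner_neg_left, inner_neg_right,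
    real_inner_comm x y]
  ring

private lemma dist_sq_sub_dist_sq (A B X : P) :
    dist X A^2 - dist X B^2 = 2 * ⟪X -ᵥ midpoint ℝ A B, B -ᵥ A⟫ := by
  have hAm : A -ᵥ midpoint ℝ A B = -((2:ℝ)⁻¹ • (B -ᵥ A)) := by
    rw [left_vsub_midpoint, invOf_eq_inv, ← neg_vsub_eq_vsub_rev B A, smul_neg]
  have hBm : B -ᵥ midpoint ℝ A B = (2:ℝ)⁻¹ • (B -ᵥ A) := by
    rw [right_vsub_midpoint, invOf_eq_inv]
  have hA : X -ᵥ A = (X -ᵥ midpoint ℝ A B) + (2:ℝ)⁻¹ • (B -ᵥ A) := by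
    rw [← vsub_sub_vsub_cancel_right X A (midpoint ℝ A B), hAm, sub_neg_eq_add]
  have hB : X -ᵥ B = (X -ᵥ midpoint ℝ A B) - (2:ℝ)⁻¹ • (B -ᵥ A) := by
    rw [← vsub_sub_vsub_cancel_right X B (midpoint ℝ A B), hBm]
  rw [dist_eq_norm_vsub V X A, dist_eq_norm_vsub V X B, hA, hB,
    ← real_inner_self_eq_norm_sq, ← real_inner_self_eq_norm_sq]
  simp only [inner_add_left, inner_add_right, inner_sub_left, inner_sub_right,
    real_inner_smul_left, real_inner_smul_right]
  rw [real_inner_comm (X -ᵥ midpoint ℝ A B) (B -ᵥ A)]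
  ring

private lemma sside_perpBisector_dist {A B C C' : P}
    (h : (AffineSubspace.perpBisector A B).SSameSide C C') :
    (dist C A < dist C B ↔ dist C' A < dist C' B) ∧
      dist C A ≠ dist C B ∧ dist C' A ≠ dist C' B := by
  obtain ⟨hw, hC, hC'⟩ := h
  obtain ⟨p₁, hp₁, p₂, hp₂, hray⟩ := hw
  set m := midpoint ℝ A B with hm
  set w := B -ᵥ A with hwdef
  have hmmem : m ∈ AffineSubspace.perpBisector A B := AffineSubspace.midpoint_mem_perpBisector A B
  have horth : ∀ p ∈ AffineSubspace.perpBisector A B, ⟪m -ᵥ p, w⟫ = 0 := by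
    intro p hp
    have hd : m -ᵥ p ∈ (AffineSubspace.perpBisector A B).direction :=
      AffineSubspace.vsub_mem_direction hmmem hp
    rw [AffineSubspace.direction_perpBisector] at hd
    rw [real_inner_comm]
    exact hd w (Submodule.mem_span_singleton_self w)
  have hfC : ⟪C -ᵥ p₁, w⟫ = ⟪C -ᵥ m, w⟫ := by
    rw [← vsub_add_vsub_cancel C m p₁, inner_add_left, horth p₁ hp₁, add_zero]
  have hfC' : ⟪C' -ᵥ p₂, w⟫ = ⟪C' -ᵥ m, w⟫ := by
    rw [← vsub_add_vsub_cancel C' m p₂, inner_add_left, horth p₂ hp₂, add_zero]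
  have hCne : C -ᵥ p₁ ≠ 0 := fun hc => hC (by rwa [vsub_eq_zero_iff_eq.mp hc])
  have hC'ne : C' -ᵥ p₂ ≠ 0 := fun hc => hC' (by rwa [vsub_eq_zero_iff_eq.mp hc])
  obtain ⟨r₁, r₂, hr₁, hr₂, hrr⟩ := hray.exists_pos hCne hC'ne
  have hinner : r₁ * ⟪C -ᵥ m, w⟫ = r₂ * ⟪C' -ᵥ m, w⟫ := by
    rw [← hfC, ← hfC', ← real_inner_smul_left, ← real_inner_smul_left, hrr]
  have hfC0 : ⟪C -ᵥ m, w⟫ ≠ 0 := fun hc =>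
    hC (AffineSubspace.mem_perpBisector_iff_inner_eq_zero.mpr hc)
  have hfC'0 : ⟪C' -ᵥ m, w⟫ ≠ 0 := fun hc =>
    hC' (AffineSubspace.mem_perpBisector_iff_inner_eq_zero.mpr hc)
  have hd1 := dist_sq_sub_dist_sq A B C
  have hd2 := dist_sq_sub_dist_sq A B C'
  rw [← hm, ← hwdef] at hd1 hd2
  have hiff1 : dist C A < dist C B ↔ ⟪C -ᵥ m, w⟫ < 0 := by
    rw [show (⟪C -ᵥ m, w⟫ < 0) ↔ dist C A^2 - dist C B^2 < 0 by
      rw [hd1]; constructor <;> intro <;> nlinarith]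
    constructor <;> intro hh
    · nlinarith [dist_nonneg (x := C) (y := A), dist_nonneg (x := C) (y := B)]
    · nlinarith [dist_nonneg (x := C) (y := A), dist_nonneg (x := C) (y := B)]
  have hiff2 : dist C' A < dist C' B ↔ ⟪C' -ᵥ m, w⟫ < 0 := by
    rw [show (⟪C' -ᵥ m, w⟫ < 0) ↔ dist C' A^2 - dist C' B^2 < 0 by
      rw [hd2]; constructor <;> intro <;> nlinarith]
    constructor <;> intro hh
    · nlinarith [dist_nonneg (x := C') (y := A), dist_nonneg (x := C') (y := B)]
    · nlinarith [dist_nonneg (x := C') (y := A), dist_nonneg (x := C') (y := B)]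
  refine ⟨?_, ?_, ?_⟩
  · rw [hiff1, hiff2]
    constructor <;> intro hh
    · nlinarith
    · nlinarith
  · intro hh; apply hfC0
    have h2 : dist C A^2 = dist C B^2 := by rw [hh]
    linarith
  · intro hh; apply hfC'0
    have h2 : dist C' A^2 = dist C' B^2 := by rw [hh]
    linarith

private lemma angle_wbtw_right {A B D : P} (C : P) (hD : Wbtw ℝ A D B) (hDA : D ≠ A) :
    ∠ C A D = ∠ C A B := by
  obtain ⟨t, ⟨ht0, ht1⟩, hDt⟩ := hD
  have hvec : D -ᵥ A = t • (B -ᵥ A) := by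
    rw [← hDt, AffineMap.lineMap_apply, vadd_vsub]
  have ht : 0 < t := by
    rcases ht0.lt_or_eq with h | h
    · exact h
    · exfalso; apply hDA; rw [← hDt, ← h, AffineMap.lineMap_apply_zero]
  rw [EuclideanGeometry.angle, EuclideanGeometry.angle, hvec,
    InnerProductGeometry.angle_smul_right_of_pos _ _ ht]

end Torsor

/-- The Euclidean plane. -/
abbrev Pt : Type := EuclideanSpace ℝ (Fin 2)

instance : Fact (Module.finrank ℝ Pt = 2) := ⟨finrank_euclideanSpace_fin⟩
instance : Module.Oriented ℝ Pt (Fin 2) :=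
  ⟨(EuclideanSpace.basisFun (Fin 2) ℝ).toBasis.orientation⟩

private lemma eq_of_angle_eq_angle_of_sside {A B C C' : Pt}
    (hABC : ¬Collinear ℝ ({A, B, C} : Set Pt)) (hABC' : ¬Collinear ℝ ({A, B, C'} : Set Pt))
    (hside : (affineSpan ℝ ({A, B} : Set Pt)).SSameSide C C')
    (hA : ∠ C A B = ∠ C' A B) (hB : ∠ C B A = ∠ C' B A) : C = C' := by
  have hAmem : A ∈ affineSpan ℝ ({A, B} : Set Pt) := mem_affineSpan ℝ (by simp)
  have hBmem : B ∈ affineSpan ℝ ({A, B} : Set Pt) := mem_affineSpan ℝ (by simp)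
  have hBA : B ≠ A := (ne₁₂_of_not_collinear hABC).symm
  have hCA : C ≠ A := (ne₁₃_of_not_collinear hABC).symm
  have hC'A : C' ≠ A := (ne₁₃_of_not_collinear hABC').symm
  have hCB : C ≠ B := (ne₂₃_of_not_collinear hABC).symm
  have hC'B : C' ≠ B := (ne₂₃_of_not_collinear hABC').symm
  have hsgn := hside.oangle_sign_eq hAmem hBmem
  have hsgn' := hside.oangle_sign_eq hBmem hAmem
  have hsA : (∡ B A C).sign = (∡ B A C').sign := by
    rw [← oangle_rotate_sign B A C, ← oangle_rotate_sign B A C']; exact hsgn.symm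
  have hsB : (∡ A B C).sign = (∡ A B C').sign := by
    rw [← oangle_rotate_sign A B C, ← oangle_rotate_sign A B C']; exact hsgn'.symm
  have hoA : ∡ B A C = ∡ B A C' := by
    refine oangle_eq_of_angle_eq_of_sign_eq ?_ hsA
    rw [angle_comm B A C, angle_comm B A C']; exact hA
  have hoB : ∡ A B C = ∡ A B C' := by
    refine oangle_eq_of_angle_eq_of_sign_eq ?_ hsB
    rw [angle_comm A B C, angle_comm A B C']; exact hB
  have h0A : ∡ C A C' = 0 := by
    rw [← oangle_add hCA hBA hC'A, oangle_rev B A C, hoA]; simp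
  have h0B : ∡ C B C' = 0 := by
    rw [← oangle_add hCB hBA.symm hC'B, oangle_rev A B C, hoB]; simp
  have hcolA : Collinear ℝ ({C, A, C'} : Set Pt) := by
    rw [← oangle_sign_eq_zero_iff_collinear, h0A]; simp
  have hcolB : Collinear ℝ ({C, B, C'} : Set Pt) := by
    rw [← oangle_sign_eq_zero_iff_collinear, h0B]; simp
  by_contra hne
  have hAline : A ∈ line[ℝ, C, C'] :=
    hcolA.mem_affineSpan_of_mem_of_ne (by simp) (by simp) (by simp) hne
  have hBline : B ∈ line[ℝ, C, C'] :=
    hcolB.mem_affineSpan_of_mem_of_ne (by simp) (by simp) (by simp) hne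
  have hall : Collinear ℝ ({A, B, C, C'} : Set Pt) :=
    collinear_insert_insert_of_mem_affineSpan_pair hAline hBline
  exact hABC (hall.subset (by intro x hx; simp at hx ⊢; tauto))
private lemma not_collinear_perm1 {A B C : Pt} (h : ¬Collinear ℝ ({A, B, C} : Set Pt)) :
    ¬Collinear ℝ ({C, A, B} : Set Pt) :=
  fun hc => h (hc.subset (by intro x hx; simp at hx ⊢; tauto))

private lemma not_collinear_perm2 {A B C : Pt} (h : ¬Collinear ℝ ({A, B, C} : Set Pt)) :
    ¬Collinear ℝ ({B, A, C} : Set Pt) :=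
  fun hc => h (hc.subset (by intro x hx; simp at hx ⊢; tauto))

/-- In a (nondegenerate) triangle, `sin γ * CA = sin β * AB`. -/
private lemma sin_mul_dist_eq {A B C : Pt} (hncol : ¬Collinear ℝ ({A, B, C} : Set Pt)) :
    Real.sin (∠ A C B) * dist C A = Real.sin (∠ C B A) * dist A B := by
  have hBC : B ≠ C := ne₂₃_of_not_collinear hncol
  have hCB0 : 0 < dist C B := dist_pos.mpr hBC.symm
  have l3 := sin_angle_mul_eq C B A
  rw [angle_comm B C A, dist_comm B C, dist_comm B A] at l3
  exact mul_left_cancel₀ (ne_of_gt hCB0) (by linear_combination l3)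

/-- larger angle opposite larger side -/
private lemma angle_lt_iff_dist_lt {A B C : Pt} (hncol : ¬Collinear ℝ ({A, B, C} : Set Pt)) :
    ∠ C A B < ∠ C B A ↔ dist C B < dist C A := by
  have hAC : A ≠ C := ne₁₃_of_not_collinear hncol
  have hBC : B ≠ C := ne₂₃_of_not_collinear hncol
  have hα0 : 0 < ∠ C A B := angle_pos_of_not_collinear (not_collinear_perm1 hncol)
  have hβ0 : 0 < ∠ C B A := angle_pos_of_not_collinear (not_collinear_perm1 (not_collinear_perm2 hncol))
  have hγ0 : 0 < ∠ A C B := angle_pos_of_not_collinear (not_collinear_perm2 (not_collinear_perm1 hncol))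
  have hsum : ∠ C A B + ∠ C B A + ∠ A C B = π := by
    have := angle_add_angle_add_angle_eq_pi B hAC
    rw [angle_comm A B C, angle_comm B C A] at this
    linarith
  have hAB0 : 0 < dist A B := dist_pos.mpr (ne₁₂_of_not_collinear hncol)
  have h1 := sin_mul_dist_eq hncol                       -- sin γ * CA = sin β * AB
  have h2 := sin_mul_dist_eq (not_collinear_perm2 hncol) -- sin (∠ B C A) * CB = sin (∠ C A B) * AB
  rw [angle_comm B C A, dist_comm B A] at h2             -- sin γ * CB = sin α * AB
  have hsinγ : 0 < Real.sin (∠ A C B) := Real.sin_pos_of_pos_of_lt_pi hγ0 (by linarith)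
  rw [lt_iff_sin_lt_sin hα0 hβ0 (by linarith)]
  constructor <;> intro hh
  · have : Real.sin (∠ C A B) * dist A B < Real.sin (∠ C B A) * dist A B :=
      (mul_lt_mul_iff_left₀ hAB0).mpr hh
    rw [← h1, ← h2] at this
    exact (mul_lt_mul_iff_right₀ hsinγ).mp this
  · have : Real.sin (∠ A C B) * dist C B < Real.sin (∠ A C B) * dist C A :=
      (mul_lt_mul_iff_right₀ hsinγ).mpr hh
    rw [h1, h2] at this
    exact (mul_lt_mul_iff_left₀ hAB0).mp this

private lemma bisector_equation {A B C D : Pt}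
    (hncol : ¬Collinear ℝ ({A, B, C} : Set Pt))
    (hD : D ∈ segment ℝ A B) (hbis : ∠ A C D = ∠ B C D) :
    (dist C D)^2 * (Real.sin (∠ A C B))^2 * (Real.sin (∠ C A B) + Real.sin (∠ C B A))^2
      = (dist A B)^2 * (Real.sin (∠ C B A))^2 *
        ((Real.sin (∠ C A B) + Real.sin (∠ C B A))^2 + (Real.sin (∠ A C B))^2
          - 2*Real.cos (∠ C A B)*Real.sin (∠ A C B)
            *(Real.sin (∠ C A B) + Real.sin (∠ C B A))) := by
  have hAC : A ≠ C := ne₁₃_of_not_collinear hncol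
  have hBC : B ≠ C := ne₂₃_of_not_collinear hncol
  have hCA0 : 0 < dist C A := dist_pos.mpr hAC.symm
  have hCB0 : 0 < dist C B := dist_pos.mpr hBC.symm
  have hDA : D ≠ A := by
    rintro rfl
    rw [angle_self_of_ne hAC] at hbis
    have : 0 < ∠ B C D := angle_pos_of_not_collinear
      (fun hc => hncol (hc.subset (by intro x hx; simp at hx ⊢; tauto)))
    linarith
  have hDB : D ≠ B := by
    rintro rfl
    rw [angle_self_of_ne hBC] at hbis
    have : 0 < ∠ A C D := angle_pos_of_not_collinear
      (fun hc => hncol (hc.subset (by intro x hx; simp at hx ⊢; tauto)))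
    linarith
  have hwbtw : Wbtw ℝ A D B := mem_segment_iff_wbtw.mp hD
  have hangA : ∠ C A D = ∠ C A B := angle_wbtw_right C hwbtw hDA
  have hangB : ∠ C B D = ∠ C B A := angle_wbtw_right C hwbtw.symm hDB
  have l1 := sin_angle_mul_eq C A D
  have l2 := sin_angle_mul_eq C B D
  have t1 : Real.sin (∠ A C D) * dist C D = Real.sin (∠ C A B) * dist A D := by
    rw [hangA, dist_comm A C] at l1
    exact mul_left_cancel₀ (ne_of_gt hCA0) (by linear_combination l1)
  have t2 : Real.sin (∠ B C D) * dist C D = Real.sin (∠ C B A) * dist D B := by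
    rw [hangB, dist_comm B C, dist_comm B D] at l2
    exact mul_left_cancel₀ (ne_of_gt hCB0) (by linear_combination l2)
  rw [hbis] at t1
  have hx : Real.sin (∠ C A B) * dist A D = Real.sin (∠ C B A) * dist D B :=
    t1.symm.trans t2
  have hADD : dist A D + dist D B = dist A B := hwbtw.dist_add_dist
  have hADeq : dist A D * (Real.sin (∠ C A B) + Real.sin (∠ C B A))
      = Real.sin (∠ C B A) * dist A B := by
    linear_combination hx + Real.sin (∠ C B A) * hADD
  have hCAeq := sin_mul_dist_eq hncol
  have hlaw := EuclideanGeometry.law_cos C A D (V := Pt)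
  rw [hangA, dist_comm D A] at hlaw
  linear_combination
    ((Real.sin (∠ A C B))^2*(Real.sin (∠ C A B) + Real.sin (∠ C B A))^2)*hlaw
    + ((Real.sin (∠ C A B) + Real.sin (∠ C B A))^2
        *(Real.sin (∠ A C B)*dist C A + Real.sin (∠ C B A)*dist A B)
       - 2*Real.cos (∠ C A B)*Real.sin (∠ A C B)*(Real.sin (∠ C A B) + Real.sin (∠ C B A))
         *Real.sin (∠ C B A)*dist A B)*hCAeq
    + ((Real.sin (∠ A C B))^2
        *((Real.sin (∠ C A B) + Real.sin (∠ C B A))*dist A D + Real.sin (∠ C B A)*dist A B)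
       - 2*Real.cos (∠ C A B)*Real.sin (∠ A C B)*(Real.sin (∠ C A B) + Real.sin (∠ C B A))
         *Real.sin (∠ A C B)*dist C A)*hADeq

/-- Two triangles on the same base `AB`, with equal opposite angles at `C` and `C'`,
with `C, C'` strictly on the same side of line `AB` and of the perpendicular bisector
of `AB`, and with equal internal angle bisectors from `C` and `C'`, are congruent. -/
theorem congr_of_bisector (A B C C' D D' : Pt)
    (hABC : AffineIndependent ℝ ![A, B, C])
    (hABC' : AffineIndependent ℝ ![A, B, C'])
    (hang : ∠ A C B = ∠ A C' B)
    (hside : (affineSpan ℝ ({A, B} : Set Pt)).SSameSide C C')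
    (hside' : (AffineSubspace.perpBisector A B).SSameSide C C')
    (hD : D ∈ segment ℝ A B) (hbisD : ∠ A C D = ∠ B C D)
    (hD' : D' ∈ segment ℝ A B) (hbisD' : ∠ A C' D' = ∠ B C' D')
    (hlen : dist C D = dist C' D') :
    C = C' := by
  have hncol : ¬Collinear ℝ ({A, B, C} : Set Pt) :=
    affineIndependent_iff_not_collinear_set.mp hABC
  have hncol' : ¬Collinear ℝ ({A, B, C'} : Set Pt) :=
    affineIndependent_iff_not_collinear_set.mp hABC'
  have hAC : A ≠ C := ne₁₃_of_not_collinear hncol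
  have hBC : B ≠ C := ne₂₃_of_not_collinear hncol
  have hAC' : A ≠ C' := ne₁₃_of_not_collinear hncol'
  have hBC' : B ≠ C' := ne₂₃_of_not_collinear hncol'
  have hAB : A ≠ B := ne₁₂_of_not_collinear hncol
  -- angles
  have hα0 : 0 < ∠ C A B := angle_pos_of_not_collinear (not_collinear_perm1 hncol)
  have hβ0 : 0 < ∠ C B A :=
    angle_pos_of_not_collinear (not_collinear_perm1 (not_collinear_perm2 hncol))
  have hγ0 : 0 < ∠ A C B :=
    angle_pos_of_not_collinear (not_collinear_perm2 (not_collinear_perm1 hncol))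
  have hγπ : ∠ A C B < π :=
    angle_lt_pi_of_not_collinear (not_collinear_perm2 (not_collinear_perm1 hncol))
  have hα'0 : 0 < ∠ C' A B := angle_pos_of_not_collinear (not_collinear_perm1 hncol')
  have hβ'0 : 0 < ∠ C' B A :=
    angle_pos_of_not_collinear (not_collinear_perm1 (not_collinear_perm2 hncol'))
  have hsum : ∠ C A B + ∠ C B A + ∠ A C B = π := by
    have := angle_add_angle_add_angle_eq_pi B hAC
    rw [angle_comm A B C, angle_comm B C A] at this
    linarith
  have hsum' : ∠ C' A B + ∠ C' B A + ∠ A C' B = π := by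
    have := angle_add_angle_add_angle_eq_pi B hAC'
    rw [angle_comm A B C', angle_comm B C' A] at this
    linarith
  -- the two bisector-length equations
  have heq1 := bisector_equation hncol hD hbisD
  have heq2 := bisector_equation hncol' hD' hbisD'
  rw [← hlen, ← hang] at heq2
  rw [show ∠ C B A = π - ∠ A C B - ∠ C A B by linarith] at heq1
  rw [show ∠ C' B A = π - ∠ A C B - ∠ C' A B by linarith] at heq2
  -- the side condition
  obtain ⟨hiff, hne1, hne2⟩ := sside_perpBisector_dist hside'
  have hltC := _root_.angle_lt_iff_dist_lt hncol
  have hltC' := _root_.angle_lt_iff_dist_lt hncol'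
  have hBAiff : dist C B < dist C A ↔ dist C' B < dist C' A := by
    constructor
    · intro h
      rcases lt_trichotomy (dist C' B) (dist C' A) with h' | h' | h'
      · exact h'
      · exact absurd h'.symm hne2
      · have := hiff.mpr h'; linarith
    · intro h
      rcases lt_trichotomy (dist C B) (dist C A) with h' | h' | h'
      · exact h'
      · exact absurd h'.symm hne1
      · have := hiff.mp h'; linarith
  have hsideiff : (∠ C A B < π - ∠ A C B - ∠ C A B) ↔ (∠ C' A B < π - ∠ A C B - ∠ C' A B) := by
    rw [show π - ∠ A C B - ∠ C A B = ∠ C B A by linarith,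
      show π - ∠ A C B - ∠ C' A B = ∠ C' B A by linarith]
    rw [hltC, hltC']
    exact hBAiff
  -- apply the key real lemma
  have hαeq : ∠ C A B = ∠ C' A B :=
    key_real hγ0 hγπ hα0 (by linarith) hα'0 (by linarith) dist_nonneg
      (dist_pos.mpr hAB) hsideiff heq1 heq2
  have hβeq : ∠ C B A = ∠ C' B A := by linarith
  exact eq_of_angle_eq_angle_of_sside hncol hncol' hside hαeq hβeq
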